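/- Let A be a commutative Noetherian ring and let I, J be integrally closed ideals of A, each containing a nonzerodivisor. If \overline{I^n} = \overline{J^n} for some natural number n >= 1, then I = J. That is, the monoid ic(A) of integrally closed ideals containing nonzerodivisors under I*J = \overline{IJ} is torsion-free. -/

import Mathlib

/-- `x` satisfies an equation of integral dependence over the ideal `I`:
`x ^ n + a 1 * x ^ (n-1) + ⋯ + a (n-1) * x + a n = 0` with `a i ∈ I ^ i`. -/
def IsIntegralOverIdeal {A : Type*} [CommRing A] (I : Ideal A) (x : A) : Prop :=
  ∃ n : ℕ, 0 < n ∧ ∃ a : ℕ → A, (∀ i, 1 ≤ i → i ≤ n → a i ∈ I ^ i) ∧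
    x ^ n + ∑ i ∈ Finset.Icc 1 n, a i * x ^ (n - i) = 0

/-- The integral closure `\overline{I}` of an ideal `I`.  The set of elements integral
over `I` is in fact an ideal, so taking the ideal span of this set does not change it. -/
def intCl {A : Type*} [CommRing A] (I : Ideal A) : Ideal A :=
  Ideal.span {x | IsIntegralOverIdeal I x}

open Polynomial

section Aux

variable {A : Type*} [CommRing A]

lemma isIntegralOverIdeal_of_mem {I : Ideal A} {x : A} (hx : x ∈ I) :
    IsIntegralOverIdeal I x := by
  refine ⟨1, one_pos, fun _ => -x, ?_, ?_⟩
  · intro i h1 h2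
    interval_cases i
    simpa using I.neg_mem hx
  · simp

lemma le_intCl (I : Ideal A) : I ≤ intCl I :=
  fun _ hx => Ideal.subset_span (isIntegralOverIdeal_of_mem hx)

set_option synthInstance.maxHeartbeats 400000 in
/-- If `x` is integral over `I`, then `x·X` is integral over the Rees algebra. -/
lemma rees_of_integral {I : Ideal A} {x : A} (h : IsIntegralOverIdeal I x) :
    ((X : A[X]) * C x) ∈ integralClosure (reesAlgebra I) A[X] := by
  obtain ⟨n, hn, a, ha, heq⟩ := h
  -- normalize the coefficient function
  set a' : ℕ → A := fun i => if i ∈ Finset.Icc 1 n then a i else 0 with ha'def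
  have ha' : ∀ i, a' i ∈ I ^ i := by
    intro i
    by_cases hi : i ∈ Finset.Icc 1 n
    · simp only [ha'def, if_pos hi]
      exact ha i (Finset.mem_Icc.mp hi).1 (Finset.mem_Icc.mp hi).2
    · simp only [ha'def, if_neg hi]; exact zero_mem _
  have heq' : x ^ n + ∑ i ∈ Finset.Icc 1 n, a' i * x ^ (n - i) = 0 := by
    rw [← heq]
    congr 1
    refine Finset.sum_congr rfl fun i hi => ?_
    have : a' i = a i := by rw [ha'def]; exact if_pos hi
    rw [this]
  set c : ℕ → ↥(reesAlgebra I) := fun i =>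
    ⟨monomial i (a' i), reesAlgebra.monomial_mem.mpr (ha' i)⟩ with hc
  refine ⟨X ^ n + ∑ i ∈ Finset.Icc 1 n, Polynomial.C (c i) * X ^ (n - i), ?_, ?_⟩
  · apply monic_X_pow_add
    refine lt_of_le_of_lt (Polynomial.degree_sum_le _ _) ?_
    rw [Finset.sup_lt_iff (by exact_mod_cast WithBot.bot_lt_coe n)]
    intro i hi
    refine lt_of_le_of_lt (Polynomial.degree_C_mul_X_pow_le _ _) ?_
    exact_mod_cast Nat.sub_lt_of_pos_le (Finset.mem_Icc.mp hi).1 (Finset.mem_Icc.mp hi).2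
  · rw [← aeval_def, map_add, map_pow, aeval_X, map_sum]
    have hterm : ∀ i ∈ Finset.Icc 1 n,
        (aeval ((X : A[X]) * C x)) (Polynomial.C (c i) * X ^ (n - i))
          = Polynomial.C (a' i * x ^ (n - i)) * X ^ n := by
      intro i hi
      obtain ⟨hi1, hi2⟩ := Finset.mem_Icc.mp hi
      rw [map_mul, map_pow, aeval_X, aeval_C]
      have : (algebraMap ↥(reesAlgebra I) A[X]) (c i) = monomial i (a' i) := rfl
      rw [this, ← C_mul_X_pow_eq_monomial, mul_pow, ← C_pow]
      calc Polynomial.C (a' i) * X ^ i * ((X : A[X]) ^ (n - i) * Polynomial.C (x ^ (n - i)))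
          = Polynomial.C (a' i * x ^ (n - i)) * (X ^ i * X ^ (n - i)) := by
            rw [map_mul]; ring
        _ = Polynomial.C (a' i * x ^ (n - i)) * X ^ n := by
            rw [← pow_add, Nat.add_sub_cancel' hi2]
    rw [Finset.sum_congr rfl hterm, ← Finset.sum_mul, ← map_sum, mul_pow, ← C_pow]
    calc (X : A[X]) ^ n * Polynomial.C (x ^ n)
          + Polynomial.C (∑ i ∈ Finset.Icc 1 n, a' i * x ^ (n - i)) * X ^ n
        = Polynomial.C (x ^ n + ∑ i ∈ Finset.Icc 1 n, a' i * x ^ (n - i)) * X ^ n := by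
          rw [map_add]; ring
      _ = 0 := by rw [heq', map_zero, zero_mul]

/-- Conversely, if `x·X` is integral over the Rees algebra, `x` is integral over `I`. -/
lemma integral_of_rees [Nontrivial A] {I : Ideal A} {x : A}
    (h : ((X : A[X]) * C x) ∈ integralClosure (reesAlgebra I) A[X]) :
    IsIntegralOverIdeal I x := by
  obtain ⟨p, hp, heval⟩ := h
  rw [← aeval_def] at heval
  set n := p.natDegree with hn
  have hn1 : 1 ≤ n := by
    by_contra hcon
    have h0 : n = 0 := by omega
    have hp1 : p = 1 := hp.natDegree_eq_zero.mp h0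
    rw [hp1, map_one] at heval
    exact one_ne_zero heval
  have hexp : (0 : A[X]) = ∑ j ∈ Finset.range (n + 1),
      ((p.coeff j : A[X]) * Polynomial.C (x ^ j)) * X ^ j := by
    rw [← heval, aeval_eq_sum_range]
    refine Finset.sum_congr rfl fun j _ => ?_
    rw [Algebra.smul_def]
    have : (algebraMap ↥(reesAlgebra I) A[X]) (p.coeff j) = (p.coeff j : A[X]) := rfl
    rw [this, mul_pow, ← C_pow]
    ring
  -- take the coefficient of X^n
  have hcoeff : (0 : A) = ∑ j ∈ Finset.range (n + 1),
      ((p.coeff j : A[X])).coeff (n - j) * x ^ j := by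
    have := congrArg (fun q : A[X] => q.coeff n) hexp
    simp only [coeff_zero, finset_sum_coeff] at this
    rw [this]
    refine Finset.sum_congr rfl fun j hj => ?_
    have hjn : j ≤ n := Nat.lt_succ_iff.mp (Finset.mem_range.mp hj)
    rw [coeff_mul_X_pow', if_pos hjn, coeff_mul_C]
  rw [Finset.sum_range_succ] at hcoeff
  have hlead : ((p.coeff n : A[X])).coeff (n - n) * x ^ n = x ^ n := by
    have : p.coeff n = 1 := hp.coeff_natDegree
    rw [this, Nat.sub_self]
    norm_num
  rw [hlead] at hcoeff
  refine ⟨n, hn1, fun i => ((p.coeff (n - i) : A[X])).coeff i, ?_, ?_⟩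
  · intro i _ _
    exact (mem_reesAlgebra_iff I _).mp (p.coeff (n - i)).2 i
  · have hre : ∑ i ∈ Finset.Icc 1 n, ((p.coeff (n - i) : A[X])).coeff i * x ^ (n - i)
        = ∑ j ∈ Finset.range n, ((p.coeff j : A[X])).coeff (n - j) * x ^ j := by
      refine Finset.sum_bij' (fun i _ => n - i) (fun j _ => n - j) ?_ ?_ ?_ ?_ ?_
      · intro i hi
        obtain ⟨h1, h2⟩ := Finset.mem_Icc.mp hi
        exact Finset.mem_range.mpr (by omega)
      · intro j hj
        have := Finset.mem_range.mp hj
        exact Finset.mem_Icc.mpr ⟨by omega, by omega⟩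
      · intro i hi
        obtain ⟨h1, h2⟩ := Finset.mem_Icc.mp hi
        omega
      · intro j hj
        have := Finset.mem_range.mp hj
        omega
      · intro i hi
        obtain ⟨h1, h2⟩ := Finset.mem_Icc.mp hi
        have : n - (n - i) = i := by omega
        rw [this]
    rw [hre, add_comm]
    exact hcoeff.symm

lemma isIntegralOverIdeal_iff_rees [Nontrivial A] (I : Ideal A) (x : A) :
    IsIntegralOverIdeal I x ↔ ((X : A[X]) * C x) ∈ integralClosure (reesAlgebra I) A[X] :=
  ⟨rees_of_integral, integral_of_rees⟩

/-- The set of elements integral over `I` is an ideal. -/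
def intIdeal [Nontrivial A] (I : Ideal A) : Ideal A where
  carrier := {x | IsIntegralOverIdeal I x}
  zero_mem' := by
    rw [Set.mem_setOf_eq, isIntegralOverIdeal_iff_rees]
    simp only [map_zero, mul_zero]
    exact zero_mem _
  add_mem' := by
    intro x y hx hy
    rw [Set.mem_setOf_eq, isIntegralOverIdeal_iff_rees] at hx hy ⊢
    rw [map_add, mul_add]
    exact add_mem hx hy
  smul_mem' := by
    intro r x hx
    rw [Set.mem_setOf_eq, isIntegralOverIdeal_iff_rees] at hx ⊢
    have hCr : (Polynomial.C r : A[X]) ∈ reesAlgebra I := by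
      rw [mem_reesAlgebra_iff]
      intro i
      rcases Nat.eq_zero_or_pos i with h0 | h0
      · subst h0; simp
      · rw [coeff_C, if_neg (by omega)]; exact zero_mem _
    have hCrInt : (Polynomial.C r : A[X]) ∈ integralClosure (reesAlgebra I) A[X] :=
      Subalgebra.algebraMap_mem _ (⟨Polynomial.C r, hCr⟩ : ↥(reesAlgebra I))
    have : (X : A[X]) * Polynomial.C (r • x) = Polynomial.C r * ((X : A[X]) * Polynomial.C x) := by
      rw [smul_eq_mul, map_mul]; ring
    rw [this]
    exact mul_mem hCrInt hx

lemma intCl_eq_intIdeal [Nontrivial A] (I : Ideal A) : intCl I = intIdeal I :=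
  Ideal.span_eq (intIdeal I)

lemma mem_intCl_iff [Nontrivial A] {I : Ideal A} {x : A} :
    x ∈ intCl I ↔ IsIntegralOverIdeal I x := by
  rw [intCl_eq_intIdeal]; rfl

/-- If `x^n` is integral over `K^n` then `x` is integral over `K`. -/
lemma isIntegralOverIdeal_of_pow {K : Ideal A} {x : A} {n : ℕ} (hn : 1 ≤ n)
    (h : IsIntegralOverIdeal (K ^ n) (x ^ n)) : IsIntegralOverIdeal K x := by
  obtain ⟨m, hm, a, ha, heq⟩ := h
  set a' : ℕ → A := fun i => if i ∈ Finset.Icc 1 m then a i else 0 with ha'def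
  have ha' : ∀ i, a' i ∈ (K ^ n) ^ i := by
    intro i
    by_cases hi : i ∈ Finset.Icc 1 m
    · simp only [ha'def, if_pos hi]
      exact ha i (Finset.mem_Icc.mp hi).1 (Finset.mem_Icc.mp hi).2
    · simp only [ha'def, if_neg hi]; exact zero_mem _
  have heq' : (x ^ n) ^ m + ∑ i ∈ Finset.Icc 1 m, a' i * (x ^ n) ^ (m - i) = 0 := by
    rw [← heq]
    congr 1
    refine Finset.sum_congr rfl fun i hi => ?_
    have : a' i = a i := by rw [ha'def]; exact if_pos hi
    rw [this]
  set b : ℕ → A := fun j => if n ∣ j then a' (j / n) else 0 with hbdef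
  have hnpos : 0 < n := hn
  refine ⟨n * m, Nat.mul_pos hnpos hm, b, ?_, ?_⟩
  · intro j hj1 hj2
    by_cases hd : n ∣ j
    · simp only [hbdef, if_pos hd]
      have : (K ^ n) ^ (j / n) = K ^ j := by
        rw [← pow_mul, Nat.mul_div_cancel' hd]
      rw [← this]
      exact ha' (j / n)
    · simp only [hbdef, if_neg hd]; exact zero_mem _
  · have himg : (Finset.Icc 1 m).image (fun i => n * i) ⊆ Finset.Icc 1 (n * m) := by
      intro j hj
      obtain ⟨i, hi, rfl⟩ := Finset.mem_image.mp hj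
      obtain ⟨h1, h2⟩ := Finset.mem_Icc.mp hi
      exact Finset.mem_Icc.mpr ⟨by nlinarith, by nlinarith⟩
    have hzero : ∀ j ∈ Finset.Icc 1 (n * m),
        j ∉ (Finset.Icc 1 m).image (fun i => n * i) → b j * x ^ (n * m - j) = 0 := by
      intro j hj hjn
      obtain ⟨hj1, hj2⟩ := Finset.mem_Icc.mp hj
      by_cases hd : n ∣ j
      · exfalso
        apply hjn
        refine Finset.mem_image.mpr ⟨j / n, ?_, Nat.mul_div_cancel' hd⟩
        obtain ⟨k, rfl⟩ := hd
        have hk1 : 1 ≤ k := Nat.pos_of_ne_zero (by rintro rfl; simp at hj1)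
        have hk2 : k ≤ m := Nat.le_of_mul_le_mul_left hj2 hnpos
        rw [Nat.mul_div_cancel_left k hnpos]
        exact Finset.mem_Icc.mpr ⟨hk1, hk2⟩
      · simp only [hbdef, if_neg hd, zero_mul]
    have hsum : ∑ j ∈ Finset.Icc 1 (n * m), b j * x ^ (n * m - j)
        = ∑ i ∈ Finset.Icc 1 m, a' i * (x ^ n) ^ (m - i) := by
      rw [← Finset.sum_subset himg hzero]
      rw [Finset.sum_image (fun i _ j _ hij => by
        exact Nat.eq_of_mul_eq_mul_left hnpos hij)]
      refine Finset.sum_congr rfl fun i hi => ?_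
      obtain ⟨h1, h2⟩ := Finset.mem_Icc.mp hi
      have hb : b (n * i) = a' i := by
        simp only [hbdef, if_pos (Dvd.intro i rfl), Nat.mul_div_cancel_left i hnpos]
      rw [hb, ← pow_mul, Nat.mul_sub]
    rw [hsum, pow_mul]
    exact heq'

end Aux

/-- Torsion-freeness: if `I, J` are integrally closed, contain nonzerodivisors, and
`intCl (I^n) = intCl (J^n)` for some `n ≥ 1`, then `I = J`. -/
theorem star_torsionFree {A : Type*} [CommRing A] [IsNoetherianRing A] (I J : Ideal A)
    (hIc : intCl I = I) (hJc : intCl J = J)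
    (hInzd : ∃ r ∈ I, r ∈ nonZeroDivisors A) (hJnzd : ∃ r ∈ J, r ∈ nonZeroDivisors A)
    (n : ℕ) (hn : 1 ≤ n) (h : intCl (I ^ n) = intCl (J ^ n)) : I = J := by
  rcases subsingleton_or_nontrivial A with hA | hA
  · exact Subsingleton.elim I J
  · have key : ∀ I J : Ideal A, intCl J = J → intCl (I ^ n) = intCl (J ^ n) → I ≤ J := by
      intro I J hJc h x hx
      have h1 : x ^ n ∈ intCl (J ^ n) := by
        rw [← h]
        exact le_intCl _ (Ideal.pow_mem_pow hx n)
      rw [mem_intCl_iff] at h1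
      have h2 := isIntegralOverIdeal_of_pow hn h1
      rw [← hJc]
      exact mem_intCl_iff.mpr h2
    exact le_antisymm (key I J hJc h) (key J I hIc h.symm)
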